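/- Let σ > 0 and ω, c real with 4ω > c². Let φ = φ_{ω,c} be the solitary profile and θ = θ_{ω,c} the traveling phase. Define the complex-valued function Φ(y) = φ(y) e^{i θ(y)}. Then Φ satisfies the complex ordinary differential equation −Φ''(y) + ω Φ(y) + i c Φ'(y) − i |Φ(y)|^{2σ} Φ'(y) = 0 for all y ∈ ℝ. -/

import Mathlib

set_option linter.unusedSectionVars false

open Real MeasureTheory

/-- The solitary wave profile `φ_{ω,c}` for the generalized DNLS equation. -/
noncomputable def solProfile (σ ω c : ℝ) (y : ℝ) : ℝ :=
  ((σ + 1) * (4 * ω - c ^ 2) /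
      (2 * Real.sqrt ω *
        (Real.cosh (σ * Real.sqrt (4 * ω - c ^ 2) * y) - c / (2 * Real.sqrt ω)))) ^
    (1 / (2 * σ))

/-- The traveling phase `θ_{ω,c}`. -/
noncomputable def travPhase (σ ω c : ℝ) (y : ℝ) : ℝ :=
  c / 2 * y - (1 / (2 * σ + 2)) * ∫ η in Set.Iio y, solProfile σ ω c η ^ (2 * σ)

/-- The complex soliton profile `Φ = φ e^{iθ}`. -/
noncomputable def solComplex (σ ω c : ℝ) (y : ℝ) : ℂ :=
  (solProfile σ ω c y : ℂ) * Complex.exp (Complex.I * (travPhase σ ω c y : ℂ))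

namespace DNLS

noncomputable def bb (σ ω c : ℝ) : ℝ := σ * Real.sqrt (4 * ω - c ^ 2)

noncomputable def DD (σ ω c y : ℝ) : ℝ :=
  Real.cosh (bb σ ω c * y) - c / (2 * Real.sqrt ω)

noncomputable def AA (σ ω c : ℝ) : ℝ := (σ + 1) * (4 * ω - c ^ 2) / (2 * Real.sqrt ω)

noncomputable def uu (σ ω c y : ℝ) : ℝ := AA σ ω c / DD σ ω c y

noncomputable def p1 (σ ω c y : ℝ) : ℝ :=
  -(Real.sqrt (4 * ω - c ^ 2) / 2) *
    (solProfile σ ω c y * Real.sinh (bb σ ω c * y)) / DD σ ω c y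

noncomputable def p2 (σ ω c y : ℝ) : ℝ :=
  -(Real.sqrt (4 * ω - c ^ 2) / 2) *
    ((p1 σ ω c y * Real.sinh (bb σ ω c * y) +
        solProfile σ ω c y * (Real.cosh (bb σ ω c * y) * bb σ ω c)) * DD σ ω c y -
      solProfile σ ω c y * Real.sinh (bb σ ω c * y) *
        (Real.sinh (bb σ ω c * y) * bb σ ω c)) / DD σ ω c y ^ 2

noncomputable def q1 (σ ω c y : ℝ) : ℝ := c / 2 - 1 / (2 * σ + 2) * uu σ ω c y

noncomputable def q2 (σ ω c y : ℝ) : ℝ :=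
  1 / (2 * σ + 2) * (AA σ ω c * (Real.sinh (bb σ ω c * y) * bb σ ω c)) / DD σ ω c y ^ 2

noncomputable def W (σ ω c y : ℝ) : ℂ :=
  (p1 σ ω c y : ℂ) + Complex.I * ((q1 σ ω c y : ℂ) * (solProfile σ ω c y : ℂ))

noncomputable def Fc (σ ω c y : ℝ) : ℂ :=
  W σ ω c y * Complex.exp (Complex.I * (travPhase σ ω c y : ℂ))

noncomputable def Gc (σ ω c y : ℝ) : ℂ :=
  ((p2 σ ω c y : ℂ) +
      Complex.I * ((q2 σ ω c y : ℂ) * (solProfile σ ω c y : ℂ) +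
        (q1 σ ω c y : ℂ) * (p1 σ ω c y : ℂ)) +
    W σ ω c y * (Complex.I * (q1 σ ω c y : ℂ))) *
      Complex.exp (Complex.I * (travPhase σ ω c y : ℂ))

variable {σ ω c : ℝ}

section Basic

variable (hσ : 0 < σ) (h : c ^ 2 < 4 * ω)
include hσ h

omit hσ in
lemma homega : 0 < ω := by nlinarith [sq_nonneg c]

omit hσ in
lemma hk : 0 < 4 * ω - c ^ 2 := by linarith

lemma hs : 0 < Real.sqrt ω := Real.sqrt_pos.2 (homega h)

lemma ht : 0 < Real.sqrt (4 * ω - c ^ 2) := Real.sqrt_pos.2 (hk h)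

lemma hbpos : 0 < bb σ ω c := mul_pos hσ (ht hσ h)

lemma hdlt : c / (2 * Real.sqrt ω) < 1 := by
  have h0 := hs hσ h
  rw [div_lt_one (by positivity)]
  nlinarith [hs hσ h, Real.sq_sqrt (homega h).le, sq_nonneg (c - 2 * Real.sqrt ω),
    sq_nonneg (c + 2 * Real.sqrt ω)]

lemma hdgt : -1 < c / (2 * Real.sqrt ω) := by
  have h0 := hs hσ h
  rw [lt_div_iff₀ (by positivity)]
  nlinarith [hs hσ h, Real.sq_sqrt (homega h).le, sq_nonneg (c + 2 * Real.sqrt ω)]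

lemma hDpos (y : ℝ) : 0 < DD σ ω c y := by
  have h1 := Real.one_le_cosh (bb σ ω c * y)
  have := hdlt hσ h
  unfold DD; linarith

lemma hApos : 0 < AA σ ω c := by
  unfold AA
  have := hk h
  have := hs hσ h
  positivity

omit hσ h in
lemma solProfile_eq (y : ℝ) :
    solProfile σ ω c y = (AA σ ω c / DD σ ω c y) ^ (1 / (2 * σ)) := by
  unfold solProfile AA DD bb
  rw [div_div]

lemma hphipos (y : ℝ) : 0 < solProfile σ ω c y := by
  rw [solProfile_eq]
  exact Real.rpow_pos_of_pos (div_pos (hApos hσ h) (hDpos hσ h y)) _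

lemma hu (y : ℝ) : solProfile σ ω c y ^ (2 * σ) = uu σ ω c y := by
  have hAD : 0 < AA σ ω c / DD σ ω c y := div_pos (hApos hσ h) (hDpos hσ h y)
  rw [solProfile_eq, ← Real.rpow_mul hAD.le, one_div,
    inv_mul_cancel₀ (by positivity), Real.rpow_one, uu]

lemma hD' (y : ℝ) :
    HasDerivAt (fun z => DD σ ω c z) (Real.sinh (bb σ ω c * y) * bb σ ω c) y := by
  have h1 : HasDerivAt (fun z : ℝ => bb σ ω c * z) (bb σ ω c) y := by
    simpa using (hasDerivAt_id y).const_mul (bb σ ω c)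
  have h2 := (Real.hasDerivAt_cosh (bb σ ω c * y)).comp y h1
  simpa [DD] using h2.sub_const (c / (2 * Real.sqrt ω))

lemma hAD' (y : ℝ) :
    HasDerivAt (fun z => uu σ ω c z)
      (-(AA σ ω c * (Real.sinh (bb σ ω c * y) * bb σ ω c)) / DD σ ω c y ^ 2) y := by
  have h2 := (hasDerivAt_const y (AA σ ω c)).div (hD' hσ h y) (hDpos hσ h y).ne'
  refine h2.congr_deriv ?_
  ring

lemma hp1 (y : ℝ) : HasDerivAt (solProfile σ ω c) (p1 σ ω c y) y := by
  have hfun : (fun z => uu σ ω c z ^ (1 / (2 * σ))) = solProfile σ ω c :=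
    funext fun z => by rw [solProfile_eq]; rfl
  have hADpos : 0 < AA σ ω c / DD σ ω c y := div_pos (hApos hσ h) (hDpos hσ h y)
  have hder := (hAD' hσ h y).rpow_const (p := 1 / (2 * σ)) (Or.inl (by
    show uu σ ω c y ≠ 0
    exact hADpos.ne'))
  rw [← hfun]
  convert hder using 1
  have huy : uu σ ω c y = AA σ ω c / DD σ ω c y := rfl
  rw [p1, solProfile_eq, huy, Real.rpow_sub hADpos, Real.rpow_one, bb]
  have h1 := (hApos hσ h).ne'
  have h2 := (hDpos hσ h y).ne'
  have h3 := hσ.ne'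
  field_simp

lemma hp2 (y : ℝ) : HasDerivAt (fun z => p1 σ ω c z) (p2 σ ω c y) y := by
  have h1 : HasDerivAt (fun z : ℝ => bb σ ω c * z) (bb σ ω c) y := by
    simpa using (hasDerivAt_id y).const_mul (bb σ ω c)
  have hsinh : HasDerivAt (fun z : ℝ => Real.sinh (bb σ ω c * z))
      (Real.cosh (bb σ ω c * y) * bb σ ω c) y := (Real.hasDerivAt_sinh _).comp y h1
  have hnum := (hp1 hσ h y).mul hsinh
  have h2 := (hnum.const_mul (-(Real.sqrt (4 * ω - c ^ 2) / 2))).div (hD' hσ h y)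
    (hDpos hσ h y).ne'
  simp only [p1]
  refine h2.congr_deriv ?_
  rw [p2, Pi.mul_apply]
  ring

lemma hDcont : Continuous (fun z => DD σ ω c z) := by
  unfold DD
  exact (Real.continuous_cosh.comp (continuous_const.mul continuous_id)).sub continuous_const

lemma hucont : Continuous (fun z => uu σ ω c z) :=
  continuous_const.div (hDcont hσ h) fun z => (hDpos hσ h z).ne'

lemma hexpInt : Integrable (fun y : ℝ => Real.exp (-bb σ ω c * |y|)) := by
  have hb := hbpos hσ h
  rw [← integrableOn_univ, ← Set.Iio_union_Ici (a := (0 : ℝ)), integrableOn_union,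
    integrableOn_Ici_iff_integrableOn_Ioi]
  constructor
  · rw [← (Measure.measurePreserving_neg (volume : Measure ℝ)).integrableOn_comp_preimage
      (Homeomorph.neg ℝ).measurableEmbedding]
    simp only [Function.comp_def, abs_neg, Set.neg_preimage, Set.neg_Iio, neg_zero]
    exact (exp_neg_integrableOn_Ioi 0 hb).congr_fun
      (fun x hx => by rw [abs_of_pos hx]) measurableSet_Ioi
  · exact (exp_neg_integrableOn_Ioi 0 hb).congr_fun
      (fun x hx => by rw [abs_of_pos hx]) measurableSet_Ioi

lemma huint : Integrable (fun z => uu σ ω c z) := by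
  have hd1 := hdlt hσ h
  have hA := hApos hσ h
  have hb := hbpos hσ h
  set d := c / (2 * Real.sqrt ω) with hd
  set M := 4 * AA σ ω c / (1 - d) with hM
  have hMpos : 0 < M := div_pos (by linarith) (by linarith)
  apply ((hexpInt hσ h).const_mul M).mono' (hucont hσ h).aestronglyMeasurable
  refine Filter.Eventually.of_forall fun y => ?_
  have hD := hDpos hσ h y
  have hcosh_ge : Real.exp (bb σ ω c * |y|) / 2 ≤ Real.cosh (bb σ ω c * y) := by
    have habs : bb σ ω c * |y| = |bb σ ω c * y| := by
      rw [abs_mul, abs_of_pos hb]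
    have hle : Real.exp |bb σ ω c * y| ≤
        Real.exp (bb σ ω c * y) + Real.exp (-(bb σ ω c * y)) := by
      rcases abs_cases (bb σ ω c * y) with ⟨h1, _⟩ | ⟨h1, _⟩ <;> rw [h1] <;>
        nlinarith [Real.exp_pos (bb σ ω c * y), Real.exp_pos (-(bb σ ω c * y))]
    rw [habs, Real.cosh_eq]
    linarith
  have hDge : (1 - d) / 4 * Real.exp (bb σ ω c * |y|) ≤ DD σ ω c y := by
    have h1 := Real.one_le_cosh (bb σ ω c * y)
    have hdg := hdgt hσ h
    have hstep : (1 - d) / 2 * Real.cosh (bb σ ω c * y) ≤ DD σ ω c y := by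
      rw [DD, ← hd]
      nlinarith
    nlinarith
  have hexpmul : Real.exp (-bb σ ω c * |y|) * Real.exp (bb σ ω c * |y|) = 1 := by
    rw [← Real.exp_add]; ring_nf; exact Real.exp_zero
  have huval : uu σ ω c y = AA σ ω c / DD σ ω c y := rfl
  rw [Real.norm_eq_abs, huval, abs_of_pos (div_pos hA hD), div_le_iff₀ hD]
  have step1 : M * Real.exp (-bb σ ω c * |y|) * ((1 - d) / 4 * Real.exp (bb σ ω c * |y|)) ≤
      M * Real.exp (-bb σ ω c * |y|) * DD σ ω c y :=
    mul_le_mul_of_nonneg_left hDge (by positivity)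
  have step2 : M * Real.exp (-bb σ ω c * |y|) * ((1 - d) / 4 * Real.exp (bb σ ω c * |y|)) =
      AA σ ω c := by
    have hne : (1 : ℝ) - d ≠ 0 := by linarith
    calc M * Real.exp (-bb σ ω c * |y|) * ((1 - d) / 4 * Real.exp (bb σ ω c * |y|))
        = M * ((1 - d) / 4) * (Real.exp (-bb σ ω c * |y|) * Real.exp (bb σ ω c * |y|)) := by
          ring
      _ = M * ((1 - d) / 4) := by rw [hexpmul, mul_one]
      _ = AA σ ω c := by rw [hM]; field_simp
  linarith

lemma htheta (y : ℝ) : HasDerivAt (travPhase σ ω c) (q1 σ ω c y) y := by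
  have hInt := huint hσ h
  have hkey : travPhase σ ω c = fun z => c / 2 * z -
      1 / (2 * σ + 2) * ((∫ η in Set.Iic (0 : ℝ), uu σ ω c η) +
        ∫ η in (0 : ℝ)..z, uu σ ω c η) := by
    funext z
    rw [travPhase]
    have h1 : ∫ η in Set.Iio z, solProfile σ ω c η ^ (2 * σ) =
        ∫ η in Set.Iic z, uu σ ω c η := by
      simp only [hu hσ h]
      exact setIntegral_congr_set Iio_ae_eq_Iic
    have h2 : (∫ η in Set.Iic (0 : ℝ), uu σ ω c η) + ∫ η in (0 : ℝ)..z, uu σ ω c η =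
        ∫ η in Set.Iic z, uu σ ω c η := by
      rw [← intervalIntegral.integral_Iic_sub_Iic hInt.integrableOn hInt.integrableOn]
      ring
    rw [h1, ← h2]
  rw [hkey]
  have hival : HasDerivAt (fun z => ∫ η in (0 : ℝ)..z, uu σ ω c η) (uu σ ω c y) y :=
    intervalIntegral.integral_hasDerivAt_right (hInt.intervalIntegrable)
      ((hucont hσ h).aestronglyMeasurable.stronglyMeasurableAtFilter)
      (hucont hσ h).continuousAt
  have h3 := ((hasDerivAt_id y).const_mul (c / 2)).sub
    ((hival.const_add (∫ η in Set.Iic (0 : ℝ), uu σ ω c η)).const_mul (1 / (2 * σ + 2)))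
  refine h3.congr_deriv ?_
  rw [q1]; ring

lemma hq2' (y : ℝ) : HasDerivAt (fun z => q1 σ ω c z) (q2 σ ω c y) y := by
  simp only [q1]
  have h1 := ((hAD' hσ h y).const_mul (1 / (2 * σ + 2))).const_sub (c / 2)
  refine h1.congr_deriv ?_
  rw [q2]; ring

lemma hPhi (y : ℝ) : HasDerivAt (solComplex σ ω c) (Fc σ ω c y) y := by
  have hφC := (hp1 hσ h y).ofReal_comp
  have hθC := (htheta hσ h y).ofReal_comp
  have hE := (hθC.const_mul Complex.I).cexp
  have h1 := hφC.mul hE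
  have hfun : solComplex σ ω c = fun z =>
      ((solProfile σ ω c z : ℂ) * Complex.exp (Complex.I * (travPhase σ ω c z : ℂ))) := rfl
  rw [hfun]
  refine h1.congr_deriv ?_
  rw [Fc, W]
  ring

lemma hderivPhi : deriv (solComplex σ ω c) = Fc σ ω c :=
  funext fun y => (hPhi hσ h y).deriv

lemma hFc (y : ℝ) : HasDerivAt (Fc σ ω c) (Gc σ ω c y) y := by
  have hφC := (hp1 hσ h y).ofReal_comp
  have hθC := (htheta hσ h y).ofReal_comp
  have hE := (hθC.const_mul Complex.I).cexp
  have hW : HasDerivAt (fun z => W σ ω c z)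
      ((p2 σ ω c y : ℂ) + Complex.I * ((q2 σ ω c y : ℂ) * (solProfile σ ω c y : ℂ) +
        (q1 σ ω c y : ℂ) * (p1 σ ω c y : ℂ))) y := by
    simp only [W]
    exact ((hp2 hσ h y).ofReal_comp).add
      (((hq2' hσ h y).ofReal_comp.mul hφC).const_mul Complex.I)
  have h1 := hW.mul hE
  have hfun : Fc σ ω c = fun z =>
      W σ ω c z * Complex.exp (Complex.I * (travPhase σ ω c z : ℂ)) := rfl
  rw [hfun]
  refine h1.congr_deriv ?_
  rw [Gc]
  ring

lemma hMzero (y : ℝ) :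
    -(q2 σ ω c y) * solProfile σ ω c y - 2 * q1 σ ω c y * p1 σ ω c y
      + c * p1 σ ω c y - uu σ ω c y * p1 σ ω c y = 0 := by
  have hDne : DD σ ω c y ≠ 0 := (hDpos hσ h y).ne'
  have hσne : σ ≠ 0 := hσ.ne'
  have hmne : 2 * σ + 2 ≠ 0 := by linarith
  simp only [q2, q1, p1, uu, bb]
  field_simp
  ring

set_option maxHeartbeats 4000000 in
lemma hRzero (y : ℝ) :
    -(p2 σ ω c y) + q1 σ ω c y ^ 2 * solProfile σ ω c y + ω * solProfile σ ω c y
      - c * q1 σ ω c y * solProfile σ ω c y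
      + uu σ ω c y * q1 σ ω c y * solProfile σ ω c y = 0 := by
  have h1 : Real.sqrt ω ^ 2 = ω := Real.sq_sqrt (homega h).le
  have h2 : Real.sqrt (4 * ω - c ^ 2) ^ 2 = 4 * ω - c ^ 2 := Real.sq_sqrt (hk h).le
  have h3 := Real.cosh_sq (σ * Real.sqrt (4 * ω - c ^ 2) * y)
  have hDne : Real.cosh (σ * Real.sqrt (4 * ω - c ^ 2) * y) - c / (2 * Real.sqrt ω) ≠ 0 :=
    (hDpos hσ h y).ne'
  have hsne : Real.sqrt ω ≠ 0 := (hs hσ h).ne'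
  have hσne : σ ≠ 0 := hσ.ne'
  have hmne : 2 * σ + 2 ≠ 0 := by linarith
  simp only [p2, p1, q1, uu, AA, DD, bb]
  set t := Real.sqrt (4 * ω - c ^ 2) with hts
  set s := Real.sqrt ω with hss
  set C := Real.cosh (σ * t * y) with hCs
  set S := Real.sinh (σ * t * y) with hSs
  set v := solProfile σ ω c y with hvs
  set Dv := C - c / (2 * s) with hDvdef
  linear_combination (norm := (field_simp; ring1))
    (v / Dv ^ 2) * (-(1 + 2 * σ) * S ^ 2 / 4 + σ / 2 * C * Dv) * h2
    + (v / Dv ^ 2) * ((4 * ω - c ^ 2) / 4 * (2 * σ + 1)) * h3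
    + (v / (Dv ^ 2 * s ^ 2)) * ((4 * ω - c ^ 2) / 4 * (2 * σ + 1)) * h1
    + (v / Dv ^ 2) * ((4 * ω - c ^ 2) / 4) *
        (Dv + C - c / (2 * s) + 2 * σ * C + (σ + 1) * c / s) * hDvdef

end Basic

end DNLS

theorem solComplex_solves_ODE (σ ω c : ℝ) (hσ : 0 < σ) (h : c ^ 2 < 4 * ω) :
    ∀ y : ℝ,
      -deriv (deriv (solComplex σ ω c)) y
        + (ω : ℂ) * solComplex σ ω c y
        + Complex.I * (c : ℂ) * deriv (solComplex σ ω c) y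
        - Complex.I * ((‖solComplex σ ω c y‖ ^ (2 * σ) : ℝ) : ℂ) *
            deriv (solComplex σ ω c) y = 0 := by
  intro y
  have hderiv : deriv (solComplex σ ω c) = DNLS.Fc σ ω c := DNLS.hderivPhi hσ h
  have hdd : deriv (deriv (solComplex σ ω c)) y = DNLS.Gc σ ω c y := by
    rw [hderiv]; exact (DNLS.hFc hσ h y).deriv
  have habs : ((‖solComplex σ ω c y‖ ^ (2 * σ) : ℝ) : ℂ) =
      ((DNLS.uu σ ω c y : ℝ) : ℂ) := by
    have h1 : ‖solComplex σ ω c y‖ = solProfile σ ω c y := by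
      rw [solComplex, norm_mul, Complex.norm_real, Real.norm_eq_abs,
        abs_of_pos (DNLS.hphipos hσ h y), Complex.norm_exp]
      simp
    rw [h1, DNLS.hu hσ h y]
  have hRC : ((-(DNLS.p2 σ ω c y) + DNLS.q1 σ ω c y ^ 2 * solProfile σ ω c y
      + ω * solProfile σ ω c y - c * DNLS.q1 σ ω c y * solProfile σ ω c y
      + DNLS.uu σ ω c y * DNLS.q1 σ ω c y * solProfile σ ω c y : ℝ) : ℂ) = 0 := by
    exact_mod_cast congrArg (fun x : ℝ => (x : ℂ)) (DNLS.hRzero hσ h y)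
  have hMC : ((-(DNLS.q2 σ ω c y) * solProfile σ ω c y
      - 2 * DNLS.q1 σ ω c y * DNLS.p1 σ ω c y + c * DNLS.p1 σ ω c y
      - DNLS.uu σ ω c y * DNLS.p1 σ ω c y : ℝ) : ℂ) = 0 := by
    exact_mod_cast congrArg (fun x : ℝ => (x : ℂ)) (DNLS.hMzero hσ h y)
  rw [hdd, hderiv, habs]
  simp only [DNLS.Gc, DNLS.Fc, DNLS.W, solComplex]
  linear_combination (norm := (push_cast; ring1))
    Complex.exp (Complex.I * (travPhase σ ω c y : ℂ)) * hRC
    + Complex.exp (Complex.I * (travPhase σ ω c y : ℂ)) * Complex.I * hMC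
    + Complex.exp (Complex.I * (travPhase σ ω c y : ℂ)) *
        ((-(DNLS.q1 σ ω c y : ℂ) ^ 2 + (c : ℂ) * (DNLS.q1 σ ω c y : ℂ)
          - (DNLS.uu σ ω c y : ℂ) * (DNLS.q1 σ ω c y : ℂ)) *
          (solProfile σ ω c y : ℂ)) * Complex.I_sq
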